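/- Let Ω ⊂ ℝ³ contain a point with vertical coordinate x₃⁰, and let ρ̄ ∈ C¹ with ρ̄ > 0, ρ̄'(x₃⁰) > 0, a > 0, g > 0, c₁ > 0. There is no function ē of the form ē(x₃) = c₁ (x₃ + C) for some constant C, with ē > 0 on Ω, satisfying the hydrostatic relation a(ρ̄ ē)'(x₃) = −g ρ̄(x₃) for all relevant x₃. Equivalently: a steady state (ρ̄, 0, ē) with Δē = 0 (ē affine in x₃), ē > 0, and ∇(a ρ̄ ē) = −ρ̄ g e₃ cannot exist when ρ̄'(x₃⁰) > 0. -/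

import Mathlib

open Real
noncomputable section

/-- nonexistence of an affine steady internal energy. If `ρ̄ = R ∈ C¹`
is positive with `R'(x₃⁰) > 0` at some height `x₃⁰` of `Ω`, `a > 0`, `g > 0`, then there
is no `ē` of the form `ē(x₃) = c₁(x₃ + C)` with `c₁ > 0`, positive on the heights of
`Ω`, satisfying the hydrostatic relation `a(ρ̄ē)' = −gρ̄` there. -/
theorem no_affine_steady_internal_energy
    (S : Set ℝ)  -- the set of heights `x₃` of points of `Ω`
    (a g : ℝ) (ha : 0 < a) (hg : 0 < g)
    (R : ℝ → ℝ) (hR : ContDiff ℝ 1 R) (hRpos : ∀ y ∈ S, 0 < R y)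
    (y₀ : ℝ) (hy₀ : y₀ ∈ S) (hR' : 0 < deriv R y₀) :
    ¬ ∃ c₁ C : ℝ, 0 < c₁ ∧ (∀ y ∈ S, 0 < c₁ * (y + C)) ∧
      (∀ y ∈ S, a * deriv (fun z => R z * (c₁ * (z + C))) y = -(g * R y)) := by
  rintro ⟨c₁, C, hc₁, hpos, heq⟩
  have hdR : DifferentiableAt ℝ R y₀ := (hR.differentiable one_ne_zero).differentiableAt
  have hdL : DifferentiableAt ℝ (fun z => c₁ * (z + C)) y₀ := by fun_prop
  have hderiv : deriv (fun z => R z * (c₁ * (z + C))) y₀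
      = deriv R y₀ * (c₁ * (y₀ + C)) + R y₀ * c₁ := by
    rw [deriv_fun_mul hdR hdL]
    have : deriv (fun z => c₁ * (z + C)) y₀ = c₁ := by
      rw [deriv_const_mul _ (by fun_prop)]
      simp [deriv_add_const]
    rw [this]
  have h1 := heq y₀ hy₀
  rw [hderiv] at h1
  have hRy := hRpos y₀ hy₀
  have hE := hpos y₀ hy₀
  nlinarith [mul_pos ha (add_pos (mul_pos hR' hE) (mul_pos hRy hc₁)), mul_pos hg hRy]
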